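/- A locally finite graph G has a non-elusive ℤ₄-flow if and only if its edge set is the union of two elements of its topological cycle space. -/

import Mathlib

open scoped Classical

/-- The oriented edges of `G` crossing from `X` to its complement. -/
def orientedCut {V : Type*} (G : SimpleGraph V) (X : Set V) : Set (V × V) :=
  {p | G.Adj p.1 p.2 ∧ p.1 ∈ X ∧ p.2 ∉ X}

/-- The (unoriented) edges of `G` crossing between `X` and its complement. -/
def edgeCut {V : Type*} (G : SimpleGraph V) (X : Set V) : Set (Sym2 V) :=
  {e | ∃ x y, G.Adj x y ∧ x ∈ X ∧ y ∉ X ∧ e = s(x, y)}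

/-- Membership in the topological cycle space of a locally finite graph:
an edge set meeting every finite cut in an even number of edges. -/
def InCycleSpace {V : Type*} (G : SimpleGraph V) (D : Set (Sym2 V)) : Prop :=
  D ⊆ G.edgeSet ∧
  ∀ X : Set V, (edgeCut G X).Finite → Even ((D ∩ edgeCut G X).ncard)

namespace Z4

variable {V : Type*} {G : SimpleGraph V}

lemma edgeCut_subset_edgeSet {X : Set V} : edgeCut G X ⊆ G.edgeSet := by
  rintro e ⟨x, y, hadj, _, _, rfl⟩
  exact hadj

lemma mk_mem_edgeCut_iff {X : Set V} {u v : V} (h : G.Adj u v) :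
    s(u, v) ∈ edgeCut G X ↔ (u ∈ X ∧ v ∉ X) ∨ (v ∈ X ∧ u ∉ X) := by
  constructor
  · rintro ⟨a, b, hab, haX, hbX, he⟩
    rcases Sym2.eq_iff.1 he with ⟨rfl, rfl⟩ | ⟨rfl, rfl⟩
    · exact Or.inl ⟨haX, hbX⟩
    · exact Or.inr ⟨haX, hbX⟩
  · rintro (⟨h1, h2⟩ | ⟨h1, h2⟩)
    · exact ⟨u, v, h, h1, h2, rfl⟩
    · exact ⟨v, u, h.symm, h1, h2, Sym2.eq_swap.symm⟩

lemma mk_mem_edgeCut_of_orientedCut {X : Set V} {p : V × V} (hp : p ∈ orientedCut G X) :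
    (Quot.mk (Sym2.Rel V)) p ∈ edgeCut G X :=
  ⟨p.1, p.2, hp.1, hp.2.1, hp.2.2, rfl⟩

lemma injOn_mk_orientedCut (X : Set V) : Set.InjOn (Quot.mk (Sym2.Rel V)) (orientedCut G X) := by
  rintro ⟨a, b⟩ ⟨_, haX, hbX⟩ ⟨c, d⟩ ⟨_, hcX, hdX⟩ h
  rcases (Sym2.mk_eq_mk_iff (p := (a, b)) (q := (c, d))).1 h with h | h
  · exact h
  · rw [Prod.swap_prod_mk] at h
    obtain ⟨rfl, rfl⟩ := Prod.ext_iff.1 h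
    exact (hbX hcX).elim

lemma image_mk_orientedCut (X : Set V) : (Quot.mk (Sym2.Rel V)) '' orientedCut G X = edgeCut G X := by
  apply Set.Subset.antisymm
  · rintro e ⟨p, hp, rfl⟩
    exact mk_mem_edgeCut_of_orientedCut hp
  · rintro e ⟨x, y, hadj, hx, hy, rfl⟩
    exact ⟨(x, y), ⟨hadj, hx, hy⟩, rfl⟩

lemma orientedCut_finite_iff {X : Set V} :
    (orientedCut G X).Finite ↔ (edgeCut G X).Finite := by
  constructor
  · intro h
    rw [← image_mk_orientedCut]
    exact h.image _
  · intro h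
    apply Set.Finite.of_finite_image _ (injOn_mk_orientedCut X)
    rw [image_mk_orientedCut]; exact h

lemma ncard_edgeCut (X : Set V) : (edgeCut G X).ncard = (orientedCut G X).ncard := by
  rw [← image_mk_orientedCut, Set.ncard_image_of_injOn (injOn_mk_orientedCut X)]

/-- A fixed antisymmetric "reference orientation" value in `ZMod 4`: odd on each edge. -/
noncomputable def t0 (u v : V) : ZMod 4 :=
  if Quot.out s(u, v) = (u, v) then 1 else 3

lemma t0_odd (u v : V) : t0 u v = 1 ∨ t0 u v = 3 := by
  unfold t0; split <;> simp

lemma t0_symm {u v : V} (h : u ≠ v) : t0 v u = - t0 u v := by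
  have hs : s(v, u) = s(u, v) := Sym2.eq_swap
  have hout : (Quot.mk (Sym2.Rel V)) (Quot.out s(u, v)) = s(u, v) := Quot.out_eq _
  unfold t0
  rw [hs]
  rcases (Sym2.mk_eq_mk_iff (p := Quot.out s(u, v)) (q := (u, v))).1 hout with h1 | h1
  · rw [if_neg, if_pos h1]
    · decide
    · rw [h1]; simp only [Prod.ext_iff]; rintro ⟨rfl, -⟩; exact h rfl
  · rw [Prod.swap_prod_mk] at h1
    rw [if_pos h1, if_neg]
    · decide
    · rw [h1]; simp only [Prod.ext_iff]; rintro ⟨rfl, -⟩; exact h rfl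
-- appended to part1
variable (C : Set (Sym2 V))

/-- mod-2 sum of endpoint values, restricted to `C`. -/
noncomputable def omf (x : V → ℤ) : Sym2 V → ZMod 2 := fun e =>
  if e ∈ C then
    Sym2.lift ⟨fun u v => ((x u + x v : ℤ) : ZMod 2), by intro a b; dsimp only; rw [add_comm]⟩ e
  else 0

/-- oriented `ZMod 4` difference weighted by `t0`, restricted to `C`. -/
noncomputable def psif (x : V → ℤ) : Sym2 V → ZMod 4 := fun e =>
  if e ∈ C then
    Sym2.lift ⟨fun u v => t0 u v * ((x u - x v : ℤ) : ZMod 4), by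
      intro a b
      dsimp only
      by_cases hab : a = b
      · subst hab; ring_nf
      · rw [t0_symm hab]
        have : ((x b - x a : ℤ) : ZMod 4) = - ((x a - x b : ℤ) : ZMod 4) := by push_cast; ring
        rw [this]; ring⟩ e
  else 0

/-- mod-2 sum of endpoint values, restricted to the complement of `C`. -/
noncomputable def chif (x : V → ℤ) : Sym2 V → ZMod 2 := fun e =>
  if e ∈ C then 0
  else Sym2.lift ⟨fun u v => ((x u + x v : ℤ) : ZMod 2), by intro a b; dsimp only; rw [add_comm]⟩ e

/-- `x` takes the same value on both ends of `e`. -/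
def sameOn (x : V → ℤ) : Sym2 V → Prop :=
  Sym2.lift ⟨fun u v => x u = x v, fun a b => propext ⟨Eq.symm, Eq.symm⟩⟩

/-- The edges on which `x` is not constant. -/
def exSet (G : SimpleGraph V) (x : V → ℤ) : Set (Sym2 V) :=
  {e | e ∈ G.edgeSet ∧ ¬ sameOn x e}

/-- integer indicator function of a vertex set. -/
noncomputable def xind (X : Set V) : V → ℤ := fun v => if v ∈ X then 1 else 0

/-- The embedding `ZMod 2 →+ ZMod 4` sending `1` to `2`. -/
def iot : ZMod 2 →+ ZMod 4 where
  toFun c := 2 * (c.val : ZMod 4)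
  map_zero' := by decide
  map_add' := by decide

lemma iot_one_ne_zero : iot 1 ≠ 0 := by decide

lemma omf_add (x y : V → ℤ) : omf C (x + y) = omf C x + omf C y := by
  funext e
  induction e using Sym2.ind with
  | _ u v =>
    simp only [omf, Pi.add_apply, Sym2.lift_mk]
    by_cases h : s(u, v) ∈ C
    · simp only [if_pos h]; push_cast; ring
    · simp only [if_neg h]; ring

lemma psif_add (x y : V → ℤ) : psif C (x + y) = psif C x + psif C y := by
  funext e
  induction e using Sym2.ind with
  | _ u v =>
    simp only [psif, Pi.add_apply, Sym2.lift_mk]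
    by_cases h : s(u, v) ∈ C
    · simp only [if_pos h]; push_cast; ring
    · simp only [if_neg h]; ring

lemma chif_add (x y : V → ℤ) : chif C (x + y) = chif C x + chif C y := by
  funext e
  induction e using Sym2.ind with
  | _ u v =>
    simp only [chif, Pi.add_apply, Sym2.lift_mk]
    by_cases h : s(u, v) ∈ C
    · simp only [if_pos h]; ring
    · simp only [if_neg h]; push_cast; ring

lemma sameOn_mk {x : V → ℤ} {u v : V} : sameOn x s(u, v) ↔ x u = x v := Iff.rfl

lemma omf_eq_zero_of_same {x : V → ℤ} {e : Sym2 V} (h : sameOn x e) : omf C x e = 0 := by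
  induction e using Sym2.ind with
  | _ u v =>
    rw [sameOn_mk] at h
    simp only [omf, Sym2.lift_mk, h]
    split
    · have : ((x v + x v : ℤ) : ZMod 2) = ((2 * x v : ℤ) : ZMod 2) := by push_cast; ring
      have h2 : ((2 : ℤ) : ZMod 2) = 0 := by decide
      rw [this, Int.cast_mul, h2, zero_mul]
    · rfl

lemma psif_eq_zero_of_same {x : V → ℤ} {e : Sym2 V} (h : sameOn x e) : psif C x e = 0 := by
  induction e using Sym2.ind with
  | _ u v =>
    rw [sameOn_mk] at h
    simp only [psif, Sym2.lift_mk, h]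
    split
    · simp
    · rfl

lemma chif_eq_zero_of_same {x : V → ℤ} {e : Sym2 V} (h : sameOn x e) : chif C x e = 0 := by
  induction e using Sym2.ind with
  | _ u v =>
    rw [sameOn_mk] at h
    simp only [chif, Sym2.lift_mk, h]
    split
    · rfl
    · have : ((x v + x v : ℤ) : ZMod 2) = ((2 * x v : ℤ) : ZMod 2) := by push_cast; ring
      have h2 : ((2 : ℤ) : ZMod 2) = 0 := by decide
      rw [this, Int.cast_mul, h2, zero_mul]

lemma sameOn_zero (e : Sym2 V) : sameOn (0 : V → ℤ) e := by
  induction e using Sym2.ind with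
  | _ u v => exact rfl

lemma sameOn_add {x y : V → ℤ} {e : Sym2 V} (hx : sameOn x e) (hy : sameOn y e) :
    sameOn (x + y) e := by
  induction e using Sym2.ind with
  | _ u v =>
    rw [sameOn_mk] at *
    simp [hx, hy]

lemma intCast_two_ite (n : ℤ) : ((n : ZMod 2)) = if Odd n then 1 else 0 := by
  rcases Int.even_or_odd n with ⟨m, rfl⟩ | ⟨m, rfl⟩
  · rw [if_neg (by simp [Int.not_odd_iff_even.2 ⟨m, rfl⟩])]
    push_cast
    exact CharTwo.add_self_eq_zero _
  · rw [if_pos ⟨m, rfl⟩]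
    push_cast
    rw [show (2 : ZMod 2) = 0 by decide, zero_mul, zero_add]

lemma natCast_two_zero_iff (n : ℕ) : ((n : ZMod 2) = 0) ↔ Even n := by
  rw [ZMod.natCast_eq_zero_iff]
  exact even_iff_two_dvd.symm

/-- indicator function with a fixed decidability instance -/
noncomputable def ind1 (S : Set (Sym2 V)) : Sym2 V → ZMod 2 := fun e =>
  if e ∈ S then 1 else 0

lemma ind1_pos {S : Set (Sym2 V)} {e : Sym2 V} (h : e ∈ S) : ind1 S e = 1 := if_pos h

lemma ind1_neg {S : Set (Sym2 V)} {e : Sym2 V} (h : e ∉ S) : ind1 S e = 0 := if_neg h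

lemma sum_indicator_ncard {S : Set (Sym2 V)} {A : Finset (Sym2 V)} (hS : S ⊆ ↑A)
    {g : Sym2 V → ZMod 2} (hg : ∀ e ∈ A, g e = ind1 S e) :
    ∑ e ∈ A, g e = (S.ncard : ZMod 2) := by
  have hfin : S.Finite := (A.finite_toSet).subset hS
  rw [Finset.sum_congr rfl hg]
  unfold ind1
  rw [Finset.sum_boole]
  congr 1
  have : A.filter (· ∈ S) = hfin.toFinset := by
    ext e
    simp only [Finset.mem_filter, Set.Finite.mem_toFinset]
    exact ⟨fun h => h.2, fun h => ⟨hS h, h⟩⟩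
  rw [this, Set.ncard_eq_toFinset_card S hfin]

/-- The odd-level set of an integer function. -/
def oddSet (z : V → ℤ) : Set V := {v | Odd (z v)}

lemma odd_add_iff_cut {z : V → ℤ} {u v : V} (hadj : G.Adj u v) :
    Odd (z u + z v) ↔ s(u, v) ∈ edgeCut G (oddSet z) := by
  rw [mk_mem_edgeCut_iff hadj, Int.odd_add]
  constructor
  · intro hiff
    by_cases hu : Odd (z u)
    · exact Or.inl ⟨hu, fun hv => (Int.not_odd_iff_even.2 (hiff.1 hu)) hv⟩
    · refine Or.inr ⟨?_, hu⟩
      by_contra h'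
      exact hu (hiff.2 (Int.not_odd_iff_even.1 h'))
  · rintro (⟨h1, h2⟩ | ⟨h1, h2⟩)
    · exact ⟨fun _ => Int.not_odd_iff_even.1 h2, fun _ => h1⟩
    · exact ⟨fun hu => (h2 hu).elim, fun hv => ((Int.not_odd_iff_even.2 hv) h1).elim⟩

lemma omf_pointwise (z : V → ℤ) {e : Sym2 V} (he : e ∈ G.edgeSet) :
    omf C z e = ind1 (C ∩ edgeCut G (oddSet z)) e := by
  simp only [ind1]
  induction e using Sym2.ind with
  | _ u v =>
    have hadj : G.Adj u v := he
    by_cases hC : s(u, v) ∈ C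
    · simp only [omf, if_pos hC, Sym2.lift_mk]
      rw [intCast_two_ite, if_congr (odd_add_iff_cut hadj) rfl rfl]
      simp [Set.mem_inter_iff, hC]
    · simp [omf, hC, Set.mem_inter_iff]

lemma chif_pointwise (z : V → ℤ) {e : Sym2 V} (he : e ∈ G.edgeSet) :
    chif C z e = ind1 ((G.edgeSet \ C) ∩ edgeCut G (oddSet z)) e := by
  simp only [ind1]
  induction e using Sym2.ind with
  | _ u v =>
    have hadj : G.Adj u v := he
    by_cases hC : s(u, v) ∈ C
    · simp [chif, hC]
    · simp only [chif, if_neg hC, Sym2.lift_mk]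
      rw [intCast_two_ite, if_congr (odd_add_iff_cut hadj) rfl rfl]
      simp [Set.mem_inter_iff, Set.mem_diff, he, hC]

lemma edgeCut_oddSet_subset_exSet (z : V → ℤ) : edgeCut G (oddSet z) ⊆ exSet G z := by
  rintro e ⟨a, b, hadj, ha, hb, rfl⟩
  refine ⟨hadj, ?_⟩
  rw [sameOn_mk]
  intro hz
  rw [oddSet, Set.mem_setOf_eq, hz] at ha
  exact hb ha

lemma aux_two_mul (t : ZMod 4) (ht : t = 1 ∨ t = 3) (a : ZMod 4) :
    t * (2 * a) = iot (ZMod.castHom (by norm_num : (2:ℕ) ∣ 4) (ZMod 2) a) := by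
  rcases ht with rfl | rfl <;> revert a <;> decide

lemma sameOn_of_sameOn_x {x : V → ℤ} {e : Sym2 V} (h : sameOn x e) :
    sameOn (fun v => x v / 2) e := by
  induction e using Sym2.ind with
  | _ u v =>
    rw [sameOn_mk] at *
    simp [h]

lemma key_psi (hCE : C ⊆ G.edgeSet)
    (HC : ∀ W : Set V, (edgeCut G W).Finite → Even ((C ∩ edgeCut G W).ncard))
    (x : V → ℤ) (A : Finset (Sym2 V)) (hA : exSet G x ⊆ ↑A) (hAE : ↑A ⊆ G.edgeSet)
    (hom : omf C x = 0) : ∑ e ∈ A, psif C x e = 0 := by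
  set y : V → ℤ := fun v => x v / 2 with hy
  have hex : exSet G y ⊆ exSet G x := by
    rintro e ⟨heE, hne⟩
    exact ⟨heE, fun hs => hne (sameOn_of_sameOn_x hs)⟩
  have hpt : ∀ e ∈ A, psif C x e = iot (omf C y e) := by
    intro e heA
    induction e using Sym2.ind with
    | _ u v =>
      by_cases hC : s(u, v) ∈ C
      · have h0 : omf C x s(u, v) = 0 := congrFun hom _
        simp only [omf, if_pos hC, Sym2.lift_mk] at h0
        have hdvd : (2 : ℤ) ∣ (x u + x v) := by
          have := (ZMod.intCast_zmod_eq_zero_iff_dvd _ 2).1 h0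
          exact_mod_cast this
        have hxy : x u - x v = 2 * (y u - y v) := by
          simp only [hy]
          omega
        simp only [psif, omf, if_pos hC, Sym2.lift_mk, hxy]
        have hcast : ((2 * (y u - y v) : ℤ) : ZMod 4) = 2 * ((y u - y v : ℤ) : ZMod 4) := by
          push_cast; ring
        rw [hcast, aux_two_mul _ (t0_odd u v) _]
        congr 1
        rw [map_intCast (ZMod.castHom (by norm_num : (2:ℕ) ∣ 4) (ZMod 2)) (y u - y v)]
        push_cast
        rw [CharTwo.sub_eq_add]
      · simp [psif, omf, hC]
  rw [Finset.sum_congr rfl hpt, ← map_sum iot (fun e => omf C y e) A]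
  have hcutfin : (edgeCut G (oddSet y)).Finite :=
    ((A.finite_toSet).subset (Set.Subset.trans hex hA)).subset (edgeCut_oddSet_subset_exSet y)
  have hsum : ∑ e ∈ A, omf C y e = ((C ∩ edgeCut G (oddSet y)).ncard : ZMod 2) := by
    apply sum_indicator_ncard
    · intro e he
      exact hA (hex (edgeCut_oddSet_subset_exSet y he.2))
    · intro e heA
      exact omf_pointwise C y (hAE heA)
  rw [hsum, (natCast_two_zero_iff _).2 (HC _ hcutfin), map_zero]

lemma key_chi (hCE : C ⊆ G.edgeSet)
    (HM : ∀ W : Set V, (edgeCut G W).Finite → C ∩ edgeCut G W = ∅ →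
      Even (((G.edgeSet \ C) ∩ edgeCut G W).ncard))
    (x : V → ℤ) (A : Finset (Sym2 V)) (hA : exSet G x ⊆ ↑A) (hAE : ↑A ⊆ G.edgeSet)
    (hom : omf C x = 0) : ∑ e ∈ A, chif C x e = 0 := by
  have hcutfin : (edgeCut G (oddSet x)).Finite :=
    ((A.finite_toSet).subset hA).subset (edgeCut_oddSet_subset_exSet x)
  have hempty : C ∩ edgeCut G (oddSet x) = ∅ := by
    ext e
    simp only [Set.mem_inter_iff, Set.mem_empty_iff_false, iff_false, not_and]
    intro heC hecut
    have h0 := congrFun hom e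
    rw [omf_pointwise C x (hCE heC), ind1_pos (Set.mem_inter heC hecut), Pi.zero_apply] at h0
    exact one_ne_zero h0
  have hsum : ∑ e ∈ A, chif C x e = (((G.edgeSet \ C) ∩ edgeCut G (oddSet x)).ncard : ZMod 2) := by
    apply sum_indicator_ncard
    · intro e he
      exact hA (edgeCut_oddSet_subset_exSet x he.2)
    · intro e heA
      exact chif_pointwise C x (hAE heA)
  rw [hsum, (natCast_two_zero_iff _).2 (HM _ hcutfin hempty)]

lemma exSet_xind_subset (X : Set V) : exSet G (xind X) ⊆ edgeCut G X := by
  rintro e ⟨heE, hne⟩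
  induction e using Sym2.ind with
  | _ u v =>
    have hadj : G.Adj u v := heE
    rw [sameOn_mk] at hne
    rw [mk_mem_edgeCut_iff hadj]
    by_cases hu : u ∈ X <;> by_cases hv : v ∈ X <;>
      simp only [xind, if_pos, if_neg, hu, hv] at hne ⊢ <;> tauto

lemma omf_zero_fun : omf C (0 : V → ℤ) = 0 := by
  funext e
  exact omf_eq_zero_of_same C (sameOn_zero e)

lemma machine {M : Type*} [AddCommMonoid M] (j : ZMod 2 →+ M) (hj : j 1 ≠ 0)
    (R : (V → ℤ) → Sym2 V → M)
    (Radd : ∀ x y : V → ℤ, ∀ e, R (x + y) e = R x e + R y e)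
    (Rvanish : ∀ (x : V → ℤ) (e : Sym2 V), e ∈ G.edgeSet → sameOn x e → R x e = 0)
    (key : ∀ (x : V → ℤ) (A : Finset (Sym2 V)), exSet G x ⊆ ↑A → ↑A ⊆ G.edgeSet →
      omf C x = 0 → ∑ e ∈ A, R x e = 0)
    (gen : ∀ (X : Set V) (h : (edgeCut G X).Finite), ∃ c : ZMod 2,
      j c = ∑ e ∈ h.toFinset, R (xind X) e) :
    ∃ φ : (Sym2 V → ZMod 2) →ₗ[ZMod 2] (ZMod 2), ∀ (X : Set V) (h : (edgeCut G X).Finite),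
      j (φ (omf C (xind X))) = ∑ e ∈ h.toFinset, R (xind X) e := by
  classical
  have htwo : ∀ a : ZMod 2, a = 0 ∨ a = 1 := by decide
  have hone : ∀ a : ZMod 2, a ≠ 0 → a = 1 := by decide
  have hself : ∀ a : ZMod 2, a + a = 0 := by decide
  have hmul1 : ∀ a : ZMod 2, a • (1 : ZMod 2) = a := by decide
  set Gen : Set ((Sym2 V → ZMod 2) × ZMod 2) := {q | ∃ (X : Set V) (h : (edgeCut G X).Finite),
    q.1 = omf C (xind X) ∧ j q.2 = ∑ e ∈ h.toFinset, R (xind X) e} with hGen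
  set Ksub : Submodule (ZMod 2) ((Sym2 V → ZMod 2) × ZMod 2) := Submodule.span (ZMod 2) Gen with hKsub
  -- the realization invariant
  have hzero : ∃ (x : V → ℤ) (A : Finset (Sym2 V)), exSet G x ⊆ ↑A ∧ ↑A ⊆ G.edgeSet ∧
      (0 : (Sym2 V → ZMod 2) × ZMod 2).1 = omf C x ∧ j (0 : (Sym2 V → ZMod 2) × ZMod 2).2 = ∑ e ∈ A, R x e := by
    refine ⟨0, ∅, ?_, ?_, ?_, ?_⟩
    · intro e he
      exact absurd (sameOn_zero e) he.2
    · simp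
    · exact (omf_zero_fun C).symm
    · simp
  have hP : ∀ q ∈ Ksub, ∃ (x : V → ℤ) (A : Finset (Sym2 V)), exSet G x ⊆ ↑A ∧ ↑A ⊆ G.edgeSet ∧
      q.1 = omf C x ∧ j q.2 = ∑ e ∈ A, R x e := by
    intro q hq
    induction hq using Submodule.span_induction with
    | mem q hqGen =>
      obtain ⟨X, h, hq1, hq2⟩ := hqGen
      refine ⟨xind X, h.toFinset, ?_, ?_, hq1, hq2⟩
      · rw [Set.Finite.coe_toFinset]
        exact exSet_xind_subset X
      · rw [Set.Finite.coe_toFinset]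
        exact edgeCut_subset_edgeSet
    | zero => exact hzero
    | add q r hq hr ihq ihr =>
      obtain ⟨x, A, hxA, hAE, hq1, hq2⟩ := ihq
      obtain ⟨x', A', hxA', hAE', hr1, hr2⟩ := ihr
      refine ⟨x + x', A ∪ A', ?_, ?_, ?_, ?_⟩
      · intro e he
        by_cases hsx : sameOn x e
        · by_cases hsx' : sameOn x' e
          · exact absurd (sameOn_add hsx hsx') he.2
          · exact Finset.coe_union A A' ▸ Set.mem_union_right _ (hxA' ⟨he.1, hsx'⟩)
        · exact Finset.coe_union A A' ▸ Set.mem_union_left _ (hxA ⟨he.1, hsx⟩)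
      · rw [Finset.coe_union]
        exact Set.union_subset hAE hAE'
      · rw [Prod.fst_add, hq1, hr1, omf_add]
      · rw [Prod.snd_add, map_add, hq2, hr2]
        have hsubs : ∀ (z : V → ℤ) (B : Finset (Sym2 V)), exSet G z ⊆ ↑B → B ⊆ A ∪ A' →
            ∑ e ∈ A ∪ A', R z e = ∑ e ∈ B, R z e := by
          intro z B hzB hBsub
          symm
          apply Finset.sum_subset hBsub
          intro e heU heB
          have heE : e ∈ G.edgeSet := by
            rcases Finset.mem_union.1 heU with h' | h'
            · exact hAE h'
            · exact hAE' h'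
          by_cases hs : sameOn z e
          · exact Rvanish z e heE hs
          · exact absurd (hzB ⟨heE, hs⟩) heB
        rw [← hsubs x A hxA Finset.subset_union_left,
          ← hsubs x' A' hxA' Finset.subset_union_right, ← Finset.sum_add_distrib]
        exact Finset.sum_congr rfl fun e _ => (Radd x x' e).symm
    | smul a q hq ih =>
      rcases htwo a with rfl | rfl
      · rw [zero_smul]; exact hzero
      · rw [one_smul]; exact ih
  have h01 : ((0, 1) : (Sym2 V → ZMod 2) × ZMod 2) ∉ Ksub := by
    intro hmem
    obtain ⟨x, A, hxA, hAE, h1, h2⟩ := hP _ hmem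
    rw [key x A hxA hAE h1.symm] at h2
    exact hj h2
  haveI : Fact (Nat.Prime 2) := ⟨Nat.prime_two⟩
  obtain ⟨g, hg⟩ : ∃ g : ((Sym2 V → ZMod 2) × ZMod 2) ⧸ Ksub →ₗ[ZMod 2] ZMod 2,
      g (Submodule.Quotient.mk ((0, 1) : (Sym2 V → ZMod 2) × ZMod 2)) ≠ 0 := by
    by_contra hcon
    push_neg at hcon
    have h0 := (Module.forall_dual_apply_eq_zero_iff (ZMod 2)
      (Submodule.Quotient.mk ((0, 1) : (Sym2 V → ZMod 2) × ZMod 2) : ((Sym2 V → ZMod 2) × ZMod 2) ⧸ Ksub)).1 hcon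
    rw [Submodule.Quotient.mk_eq_zero] at h0
    exact h01 h0
  have hg1 : g (Submodule.Quotient.mk ((0, 1) : (Sym2 V → ZMod 2) × ZMod 2)) = 1 :=
    hone _ hg
  refine ⟨((g.comp Ksub.mkQ).comp (LinearMap.inl (ZMod 2) (Sym2 V → ZMod 2) (ZMod 2))), ?_⟩
  intro X h
  obtain ⟨c, hc⟩ := gen X h
  have hmem : ((omf C (xind X), c) : (Sym2 V → ZMod 2) × ZMod 2) ∈ Ksub := Submodule.subset_span ⟨X, h, rfl, hc⟩
  have hq0 : g (Ksub.mkQ ((omf C (xind X), c) : (Sym2 V → ZMod 2) × ZMod 2)) = 0 := by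
    rw [Submodule.mkQ_apply, (Submodule.Quotient.mk_eq_zero _).2 hmem, map_zero]
  have hsplit : ((omf C (xind X), 0) : (Sym2 V → ZMod 2) × ZMod 2) = ((omf C (xind X), c) : (Sym2 V → ZMod 2) × ZMod 2) + c • ((0, 1) : (Sym2 V → ZMod 2) × ZMod 2) := by
    ext
    · simp
    · simp only [Prod.snd_add, Prod.smul_snd, smul_eq_mul, mul_one]
      exact (hself c).symm
  simp only [LinearMap.comp_apply, LinearMap.inl_apply]
  rw [Submodule.mkQ_apply] at hq0 ⊢
  rw [show ((omf C (xind X), (0 : ZMod 2)) : (Sym2 V → ZMod 2) × ZMod 2) = _ from hsplit, Submodule.Quotient.mk_add, map_add, hq0,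
    Submodule.Quotient.mk_smul, map_smul, hg1, zero_add]
  rw [hmul1 c, hc]

lemma oddSet_xind (X : Set V) : oddSet (xind X) = X := by
  ext v
  simp only [oddSet, xind, Set.mem_setOf_eq]
  by_cases hv : v ∈ X
  · simp [hv]
  · simp [hv, Int.not_odd_iff_even]

lemma image_toFinset_orientedCut {X : Set V} (ho : (orientedCut G X).Finite)
    (h : (edgeCut G X).Finite) : ho.toFinset.image (Quot.mk (Sym2.Rel V)) = h.toFinset := by
  ext e
  simp only [Finset.mem_image, Set.Finite.mem_toFinset]
  constructor
  · rintro ⟨p, hp, rfl⟩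
    exact mk_mem_edgeCut_of_orientedCut hp
  · intro he
    have := (image_mk_orientedCut (G := G) X).symm ▸ he
    obtain ⟨p, hp, rfl⟩ := this
    exact ⟨p, hp, rfl⟩

lemma sum_edge_eq_sum_pairs {M : Type*} [AddCommMonoid M] {X : Set V}
    (h : (edgeCut G X).Finite) (ho : (orientedCut G X).Finite) (g : Sym2 V → M) :
    ∑ e ∈ h.toFinset, g e = ∑ p ∈ ho.toFinset, g ((Quot.mk (Sym2.Rel V)) p) := by
  rw [← image_toFinset_orientedCut ho h]
  apply Finset.sum_image
  intro p hp q hq hpq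
  exact injOn_mk_orientedCut X (ho.mem_toFinset.1 hp) (ho.mem_toFinset.1 hq) hpq

lemma psif_xind_pair {X : Set V} {p : V × V} (hp : p ∈ orientedCut G X) :
    psif C (xind X) ((Quot.mk (Sym2.Rel V)) p) = if (Quot.mk (Sym2.Rel V)) p ∈ C then t0 p.1 p.2 else 0 := by
  obtain ⟨u, v⟩ := p
  obtain ⟨hadj, hu, hv⟩ := hp
  by_cases hC : s(u, v) ∈ C
  · simp only [psif, if_pos hC, Sym2.lift_mk, xind, if_pos hu, if_neg hv]
    norm_num
  · simp [psif, hC]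

lemma chif_xind_pair {X : Set V} {p : V × V} (hp : p ∈ orientedCut G X) :
    chif C (xind X) ((Quot.mk (Sym2.Rel V)) p) = if (Quot.mk (Sym2.Rel V)) p ∈ C then 0 else 1 := by
  obtain ⟨u, v⟩ := p
  obtain ⟨hadj, hu, hv⟩ := hp
  by_cases hC : s(u, v) ∈ C
  · simp [chif, hC]
  · simp only [chif, if_neg hC, Sym2.lift_mk, xind, if_pos hu, if_neg hv]
    norm_num

lemma omf_xind_pointwise (hCE : C ⊆ G.edgeSet) (X : Set V) (e : Sym2 V) :
    omf C (xind X) e = ind1 (C ∩ edgeCut G X) e := by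
  by_cases heE : e ∈ G.edgeSet
  · rw [omf_pointwise C (xind X) heE, oddSet_xind]
  · have heC : e ∉ C := fun h => heE (hCE h)
    rw [ind1_neg (fun h => heC h.1)]
    simp [omf, heC]

/-- The delta function at an edge. -/
noncomputable def dd (e : Sym2 V) : Sym2 V → ZMod 2 := fun e' => if e' = e then 1 else 0

lemma omf_xind_eq_sum_dd (hCE : C ⊆ G.edgeSet) {X : Set V} (hfin : (C ∩ edgeCut G X).Finite) :
    omf C (xind X) = ∑ e ∈ hfin.toFinset, dd e := by
  funext e'
  rw [omf_xind_pointwise C hCE X e', Finset.sum_apply]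
  simp only [dd, ind1]
  rw [Finset.sum_ite_eq hfin.toFinset e' (fun _ => 1)]
  congr 1
  · simp [Set.Finite.mem_toFinset]

lemma cast_psif_eq_omf (x : V → ℤ) (e : Sym2 V) :
    ZMod.castHom (by norm_num : (2:ℕ) ∣ 4) (ZMod 2) (psif C x e) = omf C x e := by
  induction e using Sym2.ind with
  | _ u v =>
    by_cases hC : s(u, v) ∈ C
    · simp only [psif, omf, if_pos hC, Sym2.lift_mk, map_mul]
      rw [map_intCast]
      have ht : ZMod.castHom (by norm_num : (2:ℕ) ∣ 4) (ZMod 2) (t0 u v) = 1 := by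
        rcases t0_odd u v with h | h <;> rw [h] <;> decide
      rw [ht, one_mul]
      push_cast
      rw [CharTwo.sub_eq_add]
    · simp [psif, omf, hC]

section Forward

/-- The set of edges where the flow takes an odd value. -/
def CoddSet (G : SimpleGraph V) (f : V → V → ZMod 4) (hanti : ∀ x y : V, f y x = - f x y) :
    Set (Sym2 V) :=
  {e | e ∈ G.edgeSet ∧ Sym2.lift ⟨fun u v =>
    ZMod.castHom (by norm_num : (2:ℕ) ∣ 4) (ZMod 2) (f u v) = 1, by
      intro a b
      dsimp only
      rw [show f b a = - f a b from hanti a b, map_neg, CharTwo.neg_eq]⟩ e}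

variable (f : V → V → ZMod 4)

variable (hanti : ∀ x y : V, f y x = - f x y) in
lemma mem_CoddSet {u v : V} :
    s(u, v) ∈ CoddSet G f hanti ↔ s(u, v) ∈ G.edgeSet ∧
      ZMod.castHom (by norm_num : (2:ℕ) ∣ 4) (ZMod 2) (f u v) = 1 := by
  rw [CoddSet, Set.mem_setOf_eq, Sym2.lift_mk]

lemma CoddSet_subset (hanti : ∀ x y : V, f y x = - f x y) :
    CoddSet G f hanti ⊆ G.edgeSet := fun _ h => h.1

lemma finsum_cut_eq {M : Type*} [AddCommMonoid M] (g : V × V → M) {X : Set V}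
    (ho : (orientedCut G X).Finite) :
    ∑ᶠ p ∈ orientedCut G X, g p = ∑ p ∈ ho.toFinset, g p := by
  have h := finsum_mem_coe_finset (s := ho.toFinset) (f := g)
  rw [Set.Finite.coe_toFinset] at h
  exact h

lemma even_of_mul_two (n : ℕ) (h : (n : ZMod 4) * 2 = 0) : Even n := by
  have h2 : ((n * 2 : ℕ) : ZMod 4) = 0 := by push_cast; exact h
  rw [ZMod.natCast_eq_zero_iff] at h2
  rw [even_iff_two_dvd]
  omega

theorem forward_dir
    (hanti : ∀ x y : V, f y x = - f x y)
    (hf0 : ∀ x y, G.Adj x y → f x y ≠ 0)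
    (hflow : ∀ X : Set V, (orientedCut G X).Finite →
      ∑ᶠ p ∈ orientedCut G X, f p.1 p.2 = 0) :
    ∃ C D : Set (Sym2 V), InCycleSpace G C ∧ InCycleSpace G D ∧ C ∪ D = G.edgeSet := by
  classical
  set cast2 := ZMod.castHom (by norm_num : (2:ℕ) ∣ 4) (ZMod 2) with hcast2
  set Co := CoddSet G f hanti with hCo
  have hCE : Co ⊆ G.edgeSet := CoddSet_subset f hanti
  have hptw : ∀ (W : Set V) (p : V × V), p ∈ orientedCut G W →
      cast2 (f p.1 p.2) = ind1 (Co ∩ edgeCut G W) ((Quot.mk (Sym2.Rel V)) p) := by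
    rintro W ⟨u, v⟩ ⟨hadj, hu, hv⟩
    have hcut : s(u, v) ∈ edgeCut G W := ⟨u, v, hadj, hu, hv, rfl⟩
    by_cases h1 : cast2 (f u v) = 1
    · rw [h1, ind1_pos (Set.mem_inter ((mem_CoddSet f hanti).2 ⟨hadj, h1⟩) hcut)]
    · have h0 : cast2 (f u v) = 0 := by
        rcases (show ∀ a : ZMod 2, a = 0 ∨ a = 1 by decide) (cast2 (f u v)) with h | h
        · exact h
        · exact absurd h h1
      rw [h0, ind1_neg]
      intro hmem
      exact h1 ((mem_CoddSet f hanti).1 hmem.1).2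
  have HC : ∀ W : Set V, (edgeCut G W).Finite → Even ((Co ∩ edgeCut G W).ncard) := by
    intro W hW
    have ho : (orientedCut G W).Finite := orientedCut_finite_iff.2 hW
    have h0 : ∑ p ∈ ho.toFinset, f p.1 p.2 = 0 := by
      rw [← finsum_cut_eq (fun p : V × V => f p.1 p.2) ho]; exact hflow W ho
    have h2 : ∑ p ∈ ho.toFinset, cast2 (f p.1 p.2) = 0 := by
      rw [← map_sum, h0, map_zero]
    rw [← natCast_two_zero_iff]
    rw [← sum_indicator_ncard (S := Co ∩ edgeCut G W) (A := hW.toFinset)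
      (g := ind1 (Co ∩ edgeCut G W))
      (by intro e he; exact hW.mem_toFinset.2 he.2) (fun e _ => rfl)]
    rw [sum_edge_eq_sum_pairs hW ho, ← h2]
    apply Finset.sum_congr rfl
    intro p hp
    exact (hptw W p (ho.mem_toFinset.1 hp)).symm
  have HM : ∀ W : Set V, (edgeCut G W).Finite → Co ∩ edgeCut G W = ∅ →
      Even (((G.edgeSet \ Co) ∩ edgeCut G W).ncard) := by
    intro W hW hempty
    have ho : (orientedCut G W).Finite := orientedCut_finite_iff.2 hW
    have h0 : ∑ p ∈ ho.toFinset, f p.1 p.2 = 0 := by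
      rw [← finsum_cut_eq (fun p : V × V => f p.1 p.2) ho]; exact hflow W ho
    have hval : ∀ p ∈ ho.toFinset, f p.1 p.2 = 2 := by
      intro p hp
      have hpcut := ho.mem_toFinset.1 hp
      have hdec : ∀ a : ZMod 4, a ≠ 0 → cast2 a ≠ 1 → a = 2 := by decide
      apply hdec _ (hf0 _ _ hpcut.1)
      intro h1
      have hthis := hptw W p hpcut
      rw [hempty] at hthis
      rw [h1, ind1_neg (by simp)] at hthis
      exact one_ne_zero hthis
    have hsum2 : (ho.toFinset.card : ZMod 4) * 2 = 0 := by
      rw [← nsmul_eq_mul, ← Finset.sum_const, ← Finset.sum_congr rfl hval, h0]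
    have heven : Even ho.toFinset.card := even_of_mul_two _ hsum2
    have hMcut : (G.edgeSet \ Co) ∩ edgeCut G W = edgeCut G W := by
      apply Set.inter_eq_right.2
      intro e he
      refine ⟨edgeCut_subset_edgeSet he, fun hc => ?_⟩
      have hee : e ∈ Co ∩ edgeCut G W := ⟨hc, he⟩
      rw [hempty] at hee
      exact hee
    rw [hMcut, ncard_edgeCut, Set.ncard_eq_toFinset_card _ ho]
    exact heven
  obtain ⟨φ, hφ⟩ := machine Co (AddMonoidHom.id (ZMod 2)) (by decide) (chif Co)
    (fun x y e => by rw [chif_add]; rfl)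
    (fun x e _ hs => chif_eq_zero_of_same Co hs)
    (key_chi Co hCE HM)
    (fun X h => ⟨∑ e ∈ h.toFinset, chif Co (xind X) e, rfl⟩)
  simp only [AddMonoidHom.id_apply] at hφ
  set S : Set (Sym2 V) := {e | e ∈ Co ∧ φ (dd e) = 1} with hS
  refine ⟨Co, (G.edgeSet \ Co) ∪ S, ⟨hCE, HC⟩, ⟨?_, ?_⟩, ?_⟩
  · intro e he
    rcases he with he | he
    · exact he.1
    · exact hCE he.1
  · intro X h
    have hfinC : (Co ∩ edgeCut G X).Finite := h.subset Set.inter_subset_right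
    have hfinM : ((G.edgeSet \ Co) ∩ edgeCut G X).Finite := h.subset Set.inter_subset_right
    have hfinS : (S ∩ edgeCut G X).Finite := h.subset Set.inter_subset_right
    have hsplit : ((G.edgeSet \ Co) ∪ S) ∩ edgeCut G X =
        ((G.edgeSet \ Co) ∩ edgeCut G X) ∪ (S ∩ edgeCut G X) := by
      rw [Set.union_inter_distrib_right]
    have hdisj : Disjoint ((G.edgeSet \ Co) ∩ edgeCut G X) (S ∩ edgeCut G X) := by
      rw [Set.disjoint_iff]
      rintro e ⟨⟨⟨_, heC⟩, _⟩, ⟨heS, _⟩⟩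
      exact (heC heS.1).elim
    rw [hsplit, Set.ncard_union_eq hdisj hfinM hfinS, ← natCast_two_zero_iff, Nat.cast_add]
    have ha : ((((G.edgeSet \ Co) ∩ edgeCut G X).ncard : ZMod 2)) =
        ∑ e ∈ h.toFinset, chif Co (xind X) e := by
      symm
      apply sum_indicator_ncard
      · intro e he
        exact h.mem_toFinset.2 he.2
      · intro e heA
        rw [chif_pointwise Co (xind X) (edgeCut_subset_edgeSet (h.mem_toFinset.1 heA)),
          oddSet_xind]
    have hb : (((S ∩ edgeCut G X).ncard : ZMod 2)) = ∑ e ∈ hfinC.toFinset, φ (dd e) := by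
      symm
      apply sum_indicator_ncard
      · rintro e ⟨heS, hecut⟩
        exact hfinC.mem_toFinset.2 ⟨heS.1, hecut⟩
      · intro e heT
        have heCc := hfinC.mem_toFinset.1 heT
        by_cases h' : φ (dd e) = 1
        · have heS : e ∈ S := ⟨heCc.1, h'⟩
          rw [h', ind1_pos (Set.mem_inter heS heCc.2)]
        · have h0 : φ (dd e) = 0 := by
            rcases (show ∀ a : ZMod 2, a = 0 ∨ a = 1 by decide) (φ (dd e)) with hx | hx
            · exact hx
            · exact absurd hx h'
          rw [h0, ind1_neg]
          rintro ⟨heS, _⟩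
          exact h' heS.2
    rw [ha, hb, ← hφ X h, omf_xind_eq_sum_dd Co hCE hfinC, map_sum]
    exact (show ∀ a : ZMod 2, a + a = 0 by decide) _
  · ext e
    simp only [Set.mem_union, Set.mem_diff, hS, Set.mem_setOf_eq]
    constructor
    · rintro (he | he | he)
      · exact hCE he
      · exact he.1
      · exact hCE he.1
    · intro he
      by_cases hc : e ∈ Co
      · exact Or.inl hc
      · exact Or.inr (Or.inl ⟨he, hc⟩)

end Forward

section Reverse

lemma iot_surj : ∀ t : ZMod 4, ZMod.castHom (by norm_num : (2:ℕ) ∣ 4) (ZMod 2) t = 0 →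
    ∃ c : ZMod 2, iot c = t := by decide

lemma iot_neg : ∀ c : ZMod 2, - iot c = iot c := by decide

theorem reverse_dir (C D : Set (Sym2 V)) (hC : InCycleSpace G C) (hD : InCycleSpace G D)
    (hU : C ∪ D = G.edgeSet) :
    ∃ f : V → V → ZMod 4,
      (∀ x y, G.Adj x y → f x y ≠ 0) ∧
      (∀ x y : V, f y x = - f x y) ∧
      (∀ X : Set V, (orientedCut G X).Finite →
        ∑ᶠ p ∈ orientedCut G X, f p.1 p.2 = 0) := by
  classical
  obtain ⟨hCE, HC⟩ := hC
  have HM : ∀ W : Set V, (edgeCut G W).Finite → C ∩ edgeCut G W = ∅ →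
      Even (((G.edgeSet \ C) ∩ edgeCut G W).ncard) := by
    intro W hW hempty
    have heq : (G.edgeSet \ C) ∩ edgeCut G W = D ∩ edgeCut G W := by
      ext e
      constructor
      · rintro ⟨⟨heE, heC⟩, hcut⟩
        have : e ∈ C ∪ D := hU.symm ▸ heE
        rcases this with h | h
        · exact (heC h).elim
        · exact ⟨h, hcut⟩
      · rintro ⟨heD, hcut⟩
        refine ⟨⟨hD.1 heD, fun hc => ?_⟩, hcut⟩
        have : e ∈ C ∩ edgeCut G W := ⟨hc, hcut⟩
        rw [hempty] at this
        exact this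
    rw [heq]
    exact hD.2 W hW
  -- machine for psif
  obtain ⟨φ₁, hφ₁⟩ := machine C iot iot_one_ne_zero (psif C)
    (fun x y e => by rw [psif_add]; rfl)
    (fun x e _ hs => psif_eq_zero_of_same C hs)
    (key_psi C hCE HC)
    (by
      intro X h
      apply iot_surj
      rw [map_sum]
      have hpt : ∀ e ∈ h.toFinset,
          ZMod.castHom (by norm_num : (2:ℕ) ∣ 4) (ZMod 2) (psif C (xind X) e) =
            omf C (xind X) e := fun e _ => cast_psif_eq_omf C (xind X) e
      rw [Finset.sum_congr rfl hpt]
      rw [sum_indicator_ncard (S := C ∩ edgeCut G X)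
        (by intro e he; exact h.mem_toFinset.2 he.2)
        (fun e _ => omf_xind_pointwise C hCE X e)]
      exact (natCast_two_zero_iff _).2 (HC X h))
  -- machine for chif
  obtain ⟨φ₂, hφ₂⟩ := machine C (AddMonoidHom.id (ZMod 2)) (by decide) (chif C)
    (fun x y e => by rw [chif_add]; rfl)
    (fun x e _ hs => chif_eq_zero_of_same C hs)
    (key_chi C hCE HM)
    (fun X h => ⟨∑ e ∈ h.toFinset, chif C (xind X) e, rfl⟩)
  simp only [AddMonoidHom.id_apply] at hφ₂
  set sφ : Sym2 V → ZMod 2 := fun e => φ₁ (dd e) + φ₂ (dd e) with hsφ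
  refine ⟨fun u v => if G.Adj u v then
      (if s(u, v) ∈ C then t0 u v + iot (sφ s(u, v)) else 2) else 0, ?_, ?_, ?_⟩
  · intro x y hadj
    dsimp only
    rw [if_pos hadj]
    by_cases hc : s(x, y) ∈ C
    · rw [if_pos hc]
      have hkey : ∀ (t : ZMod 4) (c : ZMod 2), (t = 1 ∨ t = 3) → t + iot c ≠ 0 := by decide
      exact hkey _ _ (t0_odd x y)
    · rw [if_neg hc]
      decide
  · intro x y
    dsimp only
    by_cases hadj : G.Adj x y
    · rw [if_pos hadj, if_pos hadj.symm, Sym2.eq_swap (a := y) (b := x)]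
      by_cases hc : s(x, y) ∈ C
      · rw [if_pos hc, if_pos hc, t0_symm hadj.ne, neg_add]
        congr 1
        exact (iot_neg _).symm
      · rw [if_neg hc, if_neg hc]
        decide
    · rw [if_neg hadj, if_neg (fun h => hadj h.symm)]
      simp
  · intro X ho
    dsimp only
    have hcut : (edgeCut G X).Finite := orientedCut_finite_iff.1 ho
    have hfinC : (C ∩ edgeCut G X).Finite := hcut.subset Set.inter_subset_right
    rw [finsum_cut_eq (fun p : V × V =>
      if G.Adj p.1 p.2 then (if s(p.1, p.2) ∈ C then t0 p.1 p.2 + iot (sφ s(p.1, p.2)) else 2)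
      else 0) ho]
    have hpt : ∀ p ∈ ho.toFinset,
        (if G.Adj p.1 p.2 then
          (if s(p.1, p.2) ∈ C then t0 p.1 p.2 + iot (sφ s(p.1, p.2)) else 2) else 0) =
        psif C (xind X) ((Quot.mk (Sym2.Rel V)) p) +
          iot (omf C (xind X) ((Quot.mk (Sym2.Rel V)) p) * sφ ((Quot.mk (Sym2.Rel V)) p)) +
          iot (chif C (xind X) ((Quot.mk (Sym2.Rel V)) p)) := by
      intro p hp
      have hpo := ho.mem_toFinset.1 hp
      obtain ⟨u, v⟩ := p
      obtain ⟨hadj, hu, hv⟩ := hpo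
      have hcutm : s(u, v) ∈ edgeCut G X := ⟨u, v, hadj, hu, hv, rfl⟩
      rw [if_pos hadj]
      rw [psif_xind_pair C (p := (u, v)) ⟨hadj, hu, hv⟩,
        chif_xind_pair C (p := (u, v)) ⟨hadj, hu, hv⟩,
        omf_xind_pointwise C hCE X]
      by_cases hc : s(u, v) ∈ C
      · rw [if_pos hc, if_pos hc, if_pos hc, ind1_pos (Set.mem_inter hc hcutm),
          one_mul, map_zero, add_zero]
      · rw [if_neg hc, if_neg hc, if_neg hc, ind1_neg (fun hmem => hc hmem.1),
          zero_mul, map_zero, add_zero, zero_add]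
        decide
    rw [Finset.sum_congr rfl hpt]
    rw [Finset.sum_add_distrib, Finset.sum_add_distrib, ← map_sum iot, ← map_sum iot]
    -- psif sum
    have h1 : ∑ p ∈ ho.toFinset, psif C (xind X) ((Quot.mk (Sym2.Rel V)) p) = iot (φ₁ (omf C (xind X))) := by
      rw [← sum_edge_eq_sum_pairs hcut ho (psif C (xind X))]
      exact (hφ₁ X hcut).symm
    -- chif sum
    have h3 : ∑ p ∈ ho.toFinset, chif C (xind X) ((Quot.mk (Sym2.Rel V)) p) = φ₂ (omf C (xind X)) := by
      rw [← sum_edge_eq_sum_pairs hcut ho (chif C (xind X))]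
      exact (hφ₂ X hcut).symm
    -- middle sum
    have h2 : ∑ p ∈ ho.toFinset, omf C (xind X) ((Quot.mk (Sym2.Rel V)) p) * sφ ((Quot.mk (Sym2.Rel V)) p) =
        φ₁ (omf C (xind X)) + φ₂ (omf C (xind X)) := by
      rw [← sum_edge_eq_sum_pairs hcut ho (fun e => omf C (xind X) e * sφ e)]
      have hsub : hfinC.toFinset ⊆ hcut.toFinset := by
        intro e he
        exact hcut.mem_toFinset.2 (hfinC.mem_toFinset.1 he).2
      rw [← Finset.sum_subset hsub (by
        intro e heA heT
        rw [omf_xind_pointwise C hCE X e,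
          ind1_neg (fun hmem => heT (hfinC.mem_toFinset.2 hmem)), zero_mul])]
      have : ∀ e ∈ hfinC.toFinset, omf C (xind X) e * sφ e = φ₁ (dd e) + φ₂ (dd e) := by
        intro e he
        rw [omf_xind_pointwise C hCE X e, ind1_pos (hfinC.mem_toFinset.1 he), one_mul, hsφ]
      rw [Finset.sum_congr rfl this, Finset.sum_add_distrib]
      rw [omf_xind_eq_sum_dd C hCE hfinC, map_sum, map_sum]
    rw [h1, h2, h3, ← map_add iot, ← map_add iot]
    rw [show φ₁ (omf C (xind X)) + (φ₁ (omf C (xind X)) + φ₂ (omf C (xind X))) +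
        φ₂ (omf C (xind X)) = 0 by
      have hself : ∀ a : ZMod 2, a + a = 0 := by decide
      have := hself (φ₁ (omf C (xind X)) + φ₂ (omf C (xind X)))
      linear_combination this]
    exact map_zero iot

end Reverse

end Z4

/-- A locally finite graph has a non-elusive `ℤ₄`-flow iff its edge set is the union
of two elements of its topological cycle space. -/
theorem stmt4 {V : Type*} (G : SimpleGraph V)
    (hlf : ∀ v : V, (G.neighborSet v).Finite) :
    (∃ f : V → V → ZMod 4,
        (∀ x y, G.Adj x y → f x y ≠ 0) ∧
        (∀ x y : V, f y x = - f x y) ∧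
        (∀ X : Set V, (orientedCut G X).Finite →
          ∑ᶠ p ∈ orientedCut G X, f p.1 p.2 = 0)) ↔
      (∃ C D : Set (Sym2 V), InCycleSpace G C ∧ InCycleSpace G D ∧
        C ∪ D = G.edgeSet) := by
  constructor
  · rintro ⟨f, hf0, hanti, hflow⟩
    exact Z4.forward_dir f hanti hf0 hflow
  · rintro ⟨C, D, hC, hD, hU⟩
    exact Z4.reverse_dir C D hC hD hU
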